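/- Let A ∈ ℝ^{m×n} have SVD A = ∑_{k=1}^I σ_k u_k v_kᵀ with σ₁ ≥ ⋯ ≥ σ_I > 0 and I > r. Then X* = ∑_{k=1}^r σ_k u_k v_kᵀ is a minimizer of ‖A − X‖_F over all matrices X ∈ ℝ^{m×n} with rank(X) ≤ r, and the minimum value satisfies ‖A − X*‖_F² = ∑_{k=r+1}^I σ_k². -/

import Mathlib

open Matrix Finset

/-- Frobenius norm of a real matrix. -/
noncomputable def frob {p q : ℕ} (M : Matrix (Fin p) (Fin q) ℝ) : ℝ :=
  Real.sqrt (Matrix.trace (Mᵀ * M))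

lemma frob_sq {p q : ℕ} (M : Matrix (Fin p) (Fin q) ℝ) :
    frob M ^ 2 = ∑ i : Fin p, ∑ j : Fin q, M i j ^ 2 := by
  have htr : Matrix.trace (Mᵀ * M) = ∑ i : Fin p, ∑ j : Fin q, M i j ^ 2 := by
    rw [Matrix.trace, Finset.sum_comm]
    simp [Matrix.diag, Matrix.mul_apply, sq]
  rw [frob, Real.sq_sqrt, htr]
  rw [htr]
  positivity

lemma frob_nonneg {p q : ℕ} (M : Matrix (Fin p) (Fin q) ℝ) : 0 ≤ frob M :=
  Real.sqrt_nonneg _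

noncomputable def toE {p : ℕ} (x : Fin p → ℝ) : EuclideanSpace ℝ (Fin p) := WithLp.toLp 2 x

lemma inner_toE {p : ℕ} (x y : Fin p → ℝ) :
    (inner ℝ (toE x) (toE y) : ℝ) = x ⬝ᵥ y := by
  simp [toE, PiLp.inner_apply, RCLike.inner_apply, dotProduct, mul_comm]

lemma norm_toE_sq {p : ℕ} (x : Fin p → ℝ) : ‖toE x‖ ^ 2 = ∑ i, x i ^ 2 := by
  rw [← real_inner_self_eq_norm_sq, inner_toE]
  simp [dotProduct, sq]

lemma orthonormal_toE {p I : ℕ} (w : Fin I → Fin p → ℝ)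
    (hw : ∀ i j, w i ⬝ᵥ w j = if i = j then (1 : ℝ) else 0) :
    Orthonormal ℝ (fun k => toE (w k)) := by
  rw [orthonormal_iff_ite]
  intro i j
  rw [inner_toE, hw]

lemma sum_rot {α β γ : Type*} [Fintype α] [Fintype β] [Fintype γ] (f : α → β → γ → ℝ) :
    ∑ a : α, ∑ b : β, ∑ c : γ, f a b c = ∑ b : β, ∑ c : γ, ∑ a : α, f a b c := by
  rw [Finset.sum_comm]
  exact Finset.sum_congr rfl fun b _ => Finset.sum_comm

/-- Frobenius norm squared of a combination ∑ c_k u_k v_kᵀ. -/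
lemma frob_sq_combo {m n I : ℕ} (u : Fin I → Fin m → ℝ) (v : Fin I → Fin n → ℝ)
    (hu : ∀ i j, u i ⬝ᵥ u j = if i = j then (1 : ℝ) else 0)
    (hv : ∀ i j, v i ⬝ᵥ v j = if i = j then (1 : ℝ) else 0)
    (c : Fin I → ℝ) :
    (∑ i : Fin m, ∑ j : Fin n, (∑ k : Fin I, c k * (u k i * v k j)) ^ 2)
      = ∑ k : Fin I, c k ^ 2 := by
  have expand : ∀ (i : Fin m) (j : Fin n),
      (∑ k : Fin I, c k * (u k i * v k j)) ^ 2
      = ∑ k : Fin I, ∑ l : Fin I, (c k * c l) * ((u k i * u l i) * (v k j * v l j)) := by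
    intro i j
    rw [sq, Finset.sum_mul_sum]
    congr 1; ext k; congr 1; ext l; ring
  simp only [expand]
  have swap : (∑ i : Fin m, ∑ j : Fin n, ∑ k : Fin I, ∑ l : Fin I,
      (c k * c l) * ((u k i * u l i) * (v k j * v l j)))
      = ∑ k : Fin I, ∑ l : Fin I, ∑ i : Fin m, ∑ j : Fin n,
      (c k * c l) * ((u k i * u l i) * (v k j * v l j)) := by
    have step1 : ∀ i : Fin m, (∑ j : Fin n, ∑ k : Fin I, ∑ l : Fin I,
        (c k * c l) * ((u k i * u l i) * (v k j * v l j)))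
        = ∑ k : Fin I, ∑ l : Fin I, ∑ j : Fin n,
        (c k * c l) * ((u k i * u l i) * (v k j * v l j)) := fun i =>
      sum_rot (fun j k l => (c k * c l) * ((u k i * u l i) * (v k j * v l j)))
    simp only [step1]
    exact sum_rot (fun i k l => ∑ j : Fin n, (c k * c l) * ((u k i * u l i) * (v k j * v l j)))
  rw [swap]
  have inner_eq : ∀ k l : Fin I, (∑ i : Fin m, ∑ j : Fin n,
      (c k * c l) * ((u k i * u l i) * (v k j * v l j)))
      = (c k * c l) * ((u k ⬝ᵥ u l) * (v k ⬝ᵥ v l)) := by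
    intro k l
    rw [dotProduct, dotProduct, Finset.sum_mul_sum, Finset.mul_sum]
    refine Finset.sum_congr rfl fun i _ => ?_
    rw [Finset.mul_sum]
  simp only [inner_eq, hu, hv]
  simp [sq, ite_and]

lemma sum_range_ite_lt {I r : ℕ} (h : r ≤ I) :
    (∑ i ∈ Finset.range I, if i < r then 1 else 0) = r := by
  induction I with
  | zero => simp [Nat.le_zero.mp h]
  | succ I ih =>
    rw [Finset.sum_range_succ]
    rcases Nat.lt_or_ge I r with hc | hc
    · have hr : r = I + 1 := by omega
      subst hr
      have : (∑ i ∈ Finset.range I, if i < I + 1 then 1 else 0)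
          = ∑ _i ∈ Finset.range I, 1 :=
        Finset.sum_congr rfl (fun i hi => by
          simp [Nat.lt_succ_of_lt (Finset.mem_range.mp hi)])
      rw [this, if_pos hc]; simp
    · simp [Nat.not_lt.2 hc, ih hc]

lemma card_filter_fin_lt {I r : ℕ} (h : r ≤ I) :
    (Finset.univ.filter (fun k : Fin I => (k : ℕ) < r)).card = r := by
  rw [Finset.card_filter]
  rw [Fin.sum_univ_eq_sum_range (fun k => if k < r then 1 else 0)]
  exact sum_range_ite_lt h

lemma key_scalar {I r : ℕ} (hIr : r < I) (σ : Fin I → ℝ) (hσ0 : ∀ k, 0 ≤ σ k)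
    (hσdec : Antitone σ) (t : Fin I → ℝ) (ht0 : ∀ k, 0 ≤ t k) (ht1 : ∀ k, t k ≤ 1)
    (hsum : ∑ k, t k ≤ (r : ℝ)) :
    (∑ k : Fin I, if r ≤ (k : ℕ) then σ k ^ 2 else 0)
      ≤ ∑ k : Fin I, σ k ^ 2 * (1 - t k) := by
  classical
  set s : ℝ := σ ⟨r, hIr⟩ ^ 2 with hs
  have hs0 : 0 ≤ s := sq_nonneg _
  set P : Finset (Fin I) := Finset.univ.filter (fun k => (k : ℕ) < r) with hP
  have hcard : (P.card : ℝ) = r := by rw [hP, card_filter_fin_lt hIr.le]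
  have hQle : ∀ k ∈ Finset.univ.filter (fun k : Fin I => ¬ (k : ℕ) < r),
      σ k ^ 2 ≤ s := by
    intro k hk
    have : r ≤ (k : ℕ) := Nat.not_lt.1 (Finset.mem_filter.1 hk).2
    exact pow_le_pow_left₀ (hσ0 k) (hσdec (by exact this)) 2
  have hPge : ∀ k ∈ P, s ≤ σ k ^ 2 := by
    intro k hk
    have : (k : ℕ) < r := (Finset.mem_filter.1 hk).2
    exact pow_le_pow_left₀ (hσ0 _) (hσdec (le_of_lt (by exact this))) 2
  -- rewrite LHS as a sum over the complement of P
  have hLHS : (∑ k : Fin I, if r ≤ (k : ℕ) then σ k ^ 2 else 0)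
      = ∑ k ∈ Finset.univ.filter (fun k : Fin I => ¬ (k : ℕ) < r), σ k ^ 2 := by
    rw [Finset.sum_filter]
    exact Finset.sum_congr rfl fun k _ => by
      by_cases h : r ≤ (k : ℕ) <;> simp [h, Nat.not_lt.2, Nat.lt_of_not_le]
  rw [hLHS]
  rw [← Finset.sum_filter_add_sum_filter_not Finset.univ (fun k : Fin I => (k : ℕ) < r)
    (fun k => σ k ^ 2 * (1 - t k))]
  -- reduce to: ∑_Q σ² t ≤ ∑_P σ² (1-t)
  have hQsplit : ∑ k ∈ Finset.univ.filter (fun k : Fin I => ¬ (k : ℕ) < r), σ k ^ 2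
      = (∑ k ∈ Finset.univ.filter (fun k : Fin I => ¬ (k : ℕ) < r), σ k ^ 2 * (1 - t k))
        + ∑ k ∈ Finset.univ.filter (fun k : Fin I => ¬ (k : ℕ) < r), σ k ^ 2 * t k := by
    rw [← Finset.sum_add_distrib]
    exact Finset.sum_congr rfl fun k _ => by ring
  rw [hQsplit]
  have main : (∑ k ∈ Finset.univ.filter (fun k : Fin I => ¬ (k : ℕ) < r), σ k ^ 2 * t k)
      ≤ ∑ k ∈ P, σ k ^ 2 * (1 - t k) := by
    have h1 : (∑ k ∈ Finset.univ.filter (fun k : Fin I => ¬ (k : ℕ) < r), σ k ^ 2 * t k)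
        ≤ ∑ k ∈ Finset.univ.filter (fun k : Fin I => ¬ (k : ℕ) < r), s * t k :=
      Finset.sum_le_sum fun k hk => mul_le_mul_of_nonneg_right (hQle k hk) (ht0 k)
    have h2 : (∑ k ∈ Finset.univ.filter (fun k : Fin I => ¬ (k : ℕ) < r), s * t k)
        = s * (∑ k, t k - ∑ k ∈ P, t k) := by
      rw [← Finset.mul_sum]
      congr 1
      have := Finset.sum_filter_add_sum_filter_not Finset.univ
        (fun k : Fin I => (k : ℕ) < r) t
      rw [hP]; linarith [this]
    have h3 : s * (∑ k, t k - ∑ k ∈ P, t k) ≤ s * ((r : ℝ) - ∑ k ∈ P, t k) :=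
      mul_le_mul_of_nonneg_left (by linarith) hs0
    have h4 : s * ((r : ℝ) - ∑ k ∈ P, t k) = ∑ k ∈ P, s * (1 - t k) := by
      have : (∑ k ∈ P, s * (1 - t k)) = ∑ k ∈ P, (s - s * t k) :=
        Finset.sum_congr rfl fun k _ => by ring
      rw [this, Finset.sum_sub_distrib, Finset.sum_const, ← Finset.mul_sum]
      rw [nsmul_eq_mul]
      rw [mul_comm (P.card : ℝ) s, hcard]
      ring
    have h5 : (∑ k ∈ P, s * (1 - t k)) ≤ ∑ k ∈ P, σ k ^ 2 * (1 - t k) :=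
      Finset.sum_le_sum fun k hk =>
        mul_le_mul_of_nonneg_right (hPge k hk) (by linarith [ht1 k])
    linarith
  linarith

section Proj
variable {E : Type*} [NormedAddCommGroup E] [InnerProductSpace ℝ E]
  {K : Submodule ℝ E} [K.HasOrthogonalProjection]

lemma norm_sq_proj_add (x : E) :
    ‖x‖ ^ 2 = ‖x - (K.orthogonalProjection x : E)‖ ^ 2
      + ‖(K.orthogonalProjection x : E)‖ ^ 2 := by
  have h : (inner ℝ (x - (K.orthogonalProjection x : E))
      ((K.orthogonalProjection x : E)) : ℝ) = 0 :=
    Submodule.starProjection_inner_eq_zero (K := K) x _ (K.orthogonalProjection x).2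
  have := norm_add_sq_real (x - (K.orthogonalProjection x : E))
    ((K.orthogonalProjection x : E))
  rw [sub_add_cancel] at this
  rw [this, h]
  ring

lemma proj_sq_le (x : E) : ‖(K.orthogonalProjection x : E)‖ ^ 2 ≤ ‖x‖ ^ 2 := by
  have := norm_sq_proj_add (K := K) x
  nlinarith [sq_nonneg ‖x - (K.orthogonalProjection x : E)‖]

lemma dist_sq_ge (x y : E) (hy : y ∈ K) :
    ‖x‖ ^ 2 - ‖(K.orthogonalProjection x : E)‖ ^ 2 ≤ ‖x - y‖ ^ 2 := by
  have hsplit : x - y = (x - (K.orthogonalProjection x : E))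
      + ((K.orthogonalProjection x : E) - y) := by abel
  have h : (inner ℝ (x - (K.orthogonalProjection x : E))
      ((K.orthogonalProjection x : E) - y) : ℝ) = 0 :=
    Submodule.starProjection_inner_eq_zero (K := K) x _
      (Submodule.sub_mem K (K.orthogonalProjection x).2 hy)
  have hexp := norm_add_sq_real (x - (K.orthogonalProjection x : E))
    ((K.orthogonalProjection x : E) - y)
  rw [← hsplit, h] at hexp
  have hx := norm_sq_proj_add (K := K) x
  nlinarith [sq_nonneg ‖(K.orthogonalProjection x : E) - y‖]

end Proj

lemma proj_norm_sq_eq_sum {p : ℕ} (K : Submodule ℝ (EuclideanSpace ℝ (Fin p)))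
    (x : EuclideanSpace ℝ (Fin p)) :
    ‖(K.orthogonalProjection x : EuclideanSpace ℝ (Fin p))‖ ^ 2
      = ∑ i : Fin (Module.finrank ℝ K),
        (inner ℝ ((stdOrthonormalBasis ℝ K i : EuclideanSpace ℝ (Fin p))) x : ℝ) ^ 2 := by
  set b := stdOrthonormalBasis ℝ K with hb
  set w := K.orthogonalProjection x with hw
  have h1 : ‖(w : EuclideanSpace ℝ (Fin p))‖ ^ 2 = (inner ℝ w w : ℝ) :=
    (real_inner_self_eq_norm_sq w).symm
  rw [h1, ← b.sum_inner_mul_inner w w]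
  refine Finset.sum_congr rfl fun i _ => ?_
  have h2 : (inner ℝ (b i) w : ℝ) = inner ℝ ((b i : EuclideanSpace ℝ (Fin p))) x := by
    rw [hw]
    exact Submodule.inner_orthogonalProjection_eq_of_mem_left (K := K) (b i) x
  have h3 : (inner ℝ w (b i) : ℝ) * (inner ℝ (b i) w : ℝ) = (inner ℝ (b i) w : ℝ) ^ 2 := by
    rw [real_inner_comm w (b i)]; ring
  rw [h3, h2]

lemma proj_mass {p I : ℕ} (K : Submodule ℝ (EuclideanSpace ℝ (Fin p)))
    (u : Fin I → EuclideanSpace ℝ (Fin p)) (hu : Orthonormal ℝ u) :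
    ∑ k : Fin I, ‖(K.orthogonalProjection (u k) : EuclideanSpace ℝ (Fin p))‖ ^ 2
      ≤ (Module.finrank ℝ K : ℝ) := by
  simp only [proj_norm_sq_eq_sum]
  rw [Finset.sum_comm]
  have step : ∀ i : Fin (Module.finrank ℝ K),
      (∑ k : Fin I, (inner ℝ ((stdOrthonormalBasis ℝ K i : EuclideanSpace ℝ (Fin p)))
        (u k) : ℝ) ^ 2) ≤ 1 := by
    intro i
    have hb := hu.sum_inner_products_le (𝕜 := ℝ)
      ((stdOrthonormalBasis ℝ K i : EuclideanSpace ℝ (Fin p))) (s := Finset.univ)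
    have hn : ‖((stdOrthonormalBasis ℝ K i : EuclideanSpace ℝ (Fin p)))‖ = 1 := by
      have := (stdOrthonormalBasis ℝ K).orthonormal.1 i
      exact this
    calc (∑ k : Fin I, (inner ℝ ((stdOrthonormalBasis ℝ K i : EuclideanSpace ℝ (Fin p)))
        (u k) : ℝ) ^ 2)
        = ∑ k : Fin I, ‖(inner ℝ (u k) ((stdOrthonormalBasis ℝ K i :
            EuclideanSpace ℝ (Fin p))) : ℝ)‖ ^ 2 := by
          refine Finset.sum_congr rfl fun k _ => ?_
          rw [Real.norm_eq_abs, sq_abs, real_inner_comm]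
      _ ≤ ‖((stdOrthonormalBasis ℝ K i : EuclideanSpace ℝ (Fin p)))‖ ^ 2 := hb
      _ = 1 := by rw [hn]; ring
  calc (∑ i : Fin (Module.finrank ℝ K), ∑ k : Fin I,
      (inner ℝ ((stdOrthonormalBasis ℝ K i : EuclideanSpace ℝ (Fin p))) (u k) : ℝ) ^ 2)
      ≤ ∑ _i : Fin (Module.finrank ℝ K), (1 : ℝ) := Finset.sum_le_sum fun i _ => step i
    _ = (Module.finrank ℝ K : ℝ) := by simp

lemma bessel_rows {p q I : ℕ} (M : Matrix (Fin p) (Fin q) ℝ)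
    (w : Fin I → Fin q → ℝ)
    (hw : ∀ i j, w i ⬝ᵥ w j = if i = j then (1 : ℝ) else 0) :
    ∑ k : Fin I, ∑ i : Fin p, (M.mulVec (w k) i) ^ 2 ≤ frob M ^ 2 := by
  rw [frob_sq, Finset.sum_comm]
  refine Finset.sum_le_sum fun i _ => ?_
  have hon := orthonormal_toE w hw
  have hb := hon.sum_inner_products_le (𝕜 := ℝ) (toE (M i)) (s := Finset.univ)
  calc (∑ k : Fin I, (M.mulVec (w k) i) ^ 2)
      = ∑ k : Fin I, ‖(inner ℝ (toE (w k)) (toE (M i)) : ℝ)‖ ^ 2 := by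
        refine Finset.sum_congr rfl fun k _ => ?_
        rw [Real.norm_eq_abs, sq_abs, inner_toE, Matrix.mulVec, dotProduct_comm]
    _ ≤ ‖toE (M i)‖ ^ 2 := hb
    _ = ∑ j : Fin q, M i j ^ 2 := norm_toE_sq (M i)

lemma combo_apply {m n I : ℕ} (u : Fin I → Fin m → ℝ) (v : Fin I → Fin n → ℝ)
    (c : Fin I → ℝ) (i : Fin m) (j : Fin n) :
    (∑ k : Fin I, c k • Matrix.vecMulVec (u k) (v k)) i j
      = ∑ k : Fin I, c k * (u k i * v k j) := by
  simp [Matrix.sum_apply, Matrix.vecMulVec_apply]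

lemma combo_mulVec {m n I : ℕ} (u : Fin I → Fin m → ℝ) (v : Fin I → Fin n → ℝ)
    (hv : ∀ i j, v i ⬝ᵥ v j = if i = j then (1 : ℝ) else 0)
    (c : Fin I → ℝ) (l : Fin I) :
    (∑ k : Fin I, c k • Matrix.vecMulVec (u k) (v k)).mulVec (v l) = c l • u l := by
  funext i
  rw [Matrix.mulVec, dotProduct]
  simp only [combo_apply, Finset.sum_mul]
  rw [Finset.sum_comm]
  have : ∀ k : Fin I, (∑ j : Fin n, c k * (u k i * v k j) * v l j)
      = c k * u k i * (v k ⬝ᵥ v l) := by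
    intro k
    rw [dotProduct, Finset.mul_sum]
    exact Finset.sum_congr rfl fun j _ => by ring
  simp only [this, hv]
  simp [Finset.sum_ite_eq']

/-- Eckart–Young: the rank-r truncated SVD minimizes the Frobenius
distance over matrices of rank at most r, with squared error ∑_{k>r} σ_k². -/
theorem stmt13 {m n I r : ℕ}
    (u : Fin I → Fin m → ℝ) (v : Fin I → Fin n → ℝ) (σ : Fin I → ℝ)
    (hu : ∀ i j, u i ⬝ᵥ u j = if i = j then (1 : ℝ) else 0)
    (hv : ∀ i j, v i ⬝ᵥ v j = if i = j then (1 : ℝ) else 0)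
    (hσpos : ∀ k, 0 < σ k) (hσdec : Antitone σ)
    (hIr : r < I)
    (A : Matrix (Fin m) (Fin n) ℝ)
    (hA : A = ∑ k : Fin I, σ k • Matrix.vecMulVec (u k) (v k)) :
    (∀ X : Matrix (Fin m) (Fin n) ℝ, X.rank ≤ r →
      frob (A - ∑ k : Fin I, if (k : ℕ) < r then σ k • Matrix.vecMulVec (u k) (v k) else 0)
        ≤ frob (A - X)) ∧
    frob (A - ∑ k : Fin I, if (k : ℕ) < r then σ k • Matrix.vecMulVec (u k) (v k) else 0) ^ 2
      = ∑ k : Fin I, if r ≤ (k : ℕ) then σ k ^ 2 else 0 := by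
  classical
  set B : Matrix (Fin m) (Fin n) ℝ :=
    ∑ k : Fin I, if (k : ℕ) < r then σ k • Matrix.vecMulVec (u k) (v k) else 0 with hB
  have hAB : A - B = ∑ k : Fin I,
      (if r ≤ (k : ℕ) then σ k else 0) • Matrix.vecMulVec (u k) (v k) := by
    rw [hA, hB, ← Finset.sum_sub_distrib]
    refine Finset.sum_congr rfl fun k _ => ?_
    by_cases h : (k : ℕ) < r
    · simp [h, Nat.not_le.2 h]
    · simp [h, Nat.le_of_not_lt h]
  have hfrobAB : frob (A - B) ^ 2
      = ∑ k : Fin I, if r ≤ (k : ℕ) then σ k ^ 2 else 0 := by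
    rw [frob_sq]
    simp only [hAB, combo_apply]
    rw [frob_sq_combo u v hu hv]
    refine Finset.sum_congr rfl fun k _ => ?_
    by_cases h : r ≤ (k : ℕ) <;> simp [h]
  refine ⟨?_, hfrobAB⟩
  intro X hX
  -- lower bound for any X with rank ≤ r
  have key : (∑ k : Fin I, if r ≤ (k : ℕ) then σ k ^ 2 else 0) ≤ frob (A - X) ^ 2 := by
    set e : (Fin m → ℝ) ≃ₗ[ℝ] EuclideanSpace ℝ (Fin m) :=
      (WithLp.linearEquiv 2 ℝ (Fin m → ℝ)).symm with he
    set W : Submodule ℝ (EuclideanSpace ℝ (Fin m)) :=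
      (LinearMap.range X.mulVecLin).map (e : (Fin m → ℝ) →ₗ[ℝ] EuclideanSpace ℝ (Fin m)) with hW
    have hWrank : (Module.finrank ℝ W : ℝ) ≤ (r : ℝ) := by
      have h1 : Module.finrank ℝ W = Module.finrank ℝ (LinearMap.range X.mulVecLin) :=
        LinearEquiv.finrank_map_eq e _
    
      have h2 : Module.finrank ℝ (LinearMap.range X.mulVecLin) = X.rank := rfl
      rw [h1, h2]
      exact_mod_cast hX
    have hmem : ∀ y : Fin n → ℝ, toE (X.mulVec y) ∈ W := by
      intro y
      exact ⟨X.mulVec y, ⟨y, rfl⟩, rfl⟩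
    set t : Fin I → ℝ := fun k =>
      ‖(W.orthogonalProjection (toE (u k)) : EuclideanSpace ℝ (Fin m))‖ ^ 2 with ht
    have hu1 : ∀ k, ‖toE (u k)‖ ^ 2 = 1 := by
      intro k
      rw [← real_inner_self_eq_norm_sq, inner_toE, hu]
      simp
    have ht0 : ∀ k, 0 ≤ t k := fun k => sq_nonneg _
    have ht1 : ∀ k, t k ≤ 1 := fun k => (proj_sq_le _).trans_eq (hu1 k)
    have htsum : ∑ k, t k ≤ (r : ℝ) :=
      (proj_mass W (fun k => toE (u k)) (orthonormal_toE u hu)).trans hWrank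
    have hchain1 : ∑ k : Fin I, ∑ i : Fin m, ((A - X).mulVec (v k) i) ^ 2
        ≤ frob (A - X) ^ 2 := bessel_rows _ v hv
    have hmul : ∀ k : Fin I, (A - X).mulVec (v k) = σ k • u k - X.mulVec (v k) := by
      intro k
      rw [Matrix.sub_mulVec, hA, combo_mulVec u v hv σ k]
    have hterm : ∀ k : Fin I, σ k ^ 2 * (1 - t k)
        ≤ ∑ i : Fin m, ((A - X).mulVec (v k) i) ^ 2 := by
      intro k
      have hns : (∑ i : Fin m, ((A - X).mulVec (v k) i) ^ 2)
          = ‖toE (σ k • u k) - toE (X.mulVec (v k))‖ ^ 2 := by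
        rw [hmul k, ← norm_toE_sq]
        rfl
      rw [hns]
      have hd := dist_sq_ge (K := W) (toE (σ k • u k)) (toE (X.mulVec (v k))) (hmem _)
      have hsm : toE (σ k • u k) = σ k • toE (u k) := rfl
      have hnorm1 : ‖toE (σ k • u k)‖ ^ 2 = σ k ^ 2 := by
        rw [hsm, norm_smul]
        rw [mul_pow]
        rw [hu1 k]
        simp [sq_abs]
      have hproj : ‖(W.orthogonalProjection (toE (σ k • u k)) :
          EuclideanSpace ℝ (Fin m))‖ ^ 2 = σ k ^ 2 * t k := by
        rw [hsm, _root_.map_smul]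
        have : ((σ k • W.orthogonalProjection (toE (u k)) : W) :
            EuclideanSpace ℝ (Fin m))
            = σ k • (W.orthogonalProjection (toE (u k)) : EuclideanSpace ℝ (Fin m)) := rfl
        rw [this, norm_smul, mul_pow, ht]
        simp [sq_abs]
      rw [hnorm1, hproj] at hd
      nlinarith [hd]
    have hchain2 : (∑ k : Fin I, σ k ^ 2 * (1 - t k))
        ≤ ∑ k : Fin I, ∑ i : Fin m, ((A - X).mulVec (v k) i) ^ 2 :=
      Finset.sum_le_sum fun k _ => hterm k
    have hkey := key_scalar hIr σ (fun k => (hσpos k).le) hσdec t ht0 ht1 htsum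
    linarith
  have hsq : frob (A - B) ^ 2 ≤ frob (A - X) ^ 2 := by
    rw [hfrobAB]; exact key
  nlinarith [frob_nonneg (A - B), frob_nonneg (A - X), hsq]
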